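/- Let (X, k) be a harvestable pair of a 2-colored rooted tree and index. Then for every M \ge 0, \zeta^{\sha}_{\widehat{S},M}(X; k) = \sum_{v \in V_\bullet} (-1)^{k_{P(rt,v)}} \sum_{l \in \mathbb{Z}_{\ge0}^{P(rt,v)}} b_{P(rt,v)}(k, l)\, \zeta_M(X_v; k+l)\, t^{l_{P(rt,v)}} in \mathbb{Q}[[t]], where \zeta^{\sha}_{\widehat{S},M}(X;k) = \sum_{u \in V_\bullet} \zeta_M(X, u; k) with \zeta_M(X, u; k) = \sum_{(m_v) \in I_M(V_\bullet,u)} \prod_{e\in E} (\sum_{v: e \in P(rt,v)} (m_v + \delta_{u,v} t))^{-k_e}, and I_M(V_\bullet, u) = \{(m_v): m_v > 0 for v \ne u, -M < m_u < 0, \sum m_v = 0\}. -/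

import Mathlib

attribute [local instance] Classical.propDecidable

/-- A 2-colored rooted tree X = (V, E, rt, V_•): a finite tree (V, E) with a root
rt ∈ V and a subset V_• ⊆ V containing all terminal (degree-1) vertices. -/
structure CRT : Type 1 where
  V : Type
  [fV : Fintype V]
  [dV : DecidableEq V]
  G : SimpleGraph V
  isTree : G.IsTree
  rt : V
  Vb : Finset V
  terminal_mem : ∀ v : V, (G.neighborSet v).ncard = 1 → v ∈ Vb

attribute [instance] CRT.fV CRT.dV

/-- The unique path between two vertices of a tree, as a walk. -/
noncomputable def tpath {V : Type} (G : SimpleGraph V) (h : G.IsTree) (a b : V) :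
    G.Walk a b :=
  (((SimpleGraph.isTree_iff_existsUnique_path).mp h).2 a b).exists.choose

/-- P(a,b): the list of edges of the path from a to b. -/
noncomputable def CRT.pEdges (A : CRT) (a b : A.V) : List (Sym2 A.V) :=
  (tpath A.G A.isTree a b).edges

/-- k_{P(a,b)} = ∑_{e ∈ P(a,b)} k_e. -/
noncomputable def CRT.kP (A : CRT) (k : Sym2 A.V → ℕ) (a b : A.V) : ℕ :=
  ((A.pEdges a b).map k).sum

/-- An index k on X is essentially positive if k_{P(v,v')} > 0 for all distinct
v, v' ∈ V_•. -/
def CRT.EssPos (A : CRT) (k : Sym2 A.V → ℕ) : Prop :=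
  ∀ a ∈ A.Vb, ∀ b ∈ A.Vb, a ≠ b → 0 < A.kP k a b

/-- The finite multiple harmonic sum ζ_M(X; k) attached to a 2-colored rooted tree:
∑_{(m_v) ∈ ℤ_{≥1}^{V_•}, Σ m_v = M} ∏_{e ∈ E} (∑_{v ∈ V_• : e ∈ P(rt,v)} m_v)^{-k_e}. -/
noncomputable def CRT.zetaM (A : CRT) (k : Sym2 A.V → ℕ) (M : ℕ) : ℚ :=
  ∑ m ∈ (A.Vb.pi fun _ => Finset.Icc 1 M).filter
      (fun m => (∑ v ∈ A.Vb.attach, m v.1 v.2) = M),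
    ∏ e ∈ Finset.univ.filter (fun e : Sym2 A.V => e ∈ A.G.edgeSet),
      ((∑ v ∈ A.Vb.attach.filter (fun v => e ∈ A.pEdges A.rt v.1),
          (m v.1 v.2 : ℚ))⁻¹) ^ k e

/-- Re-rooting X_v = (V, E, v, V_•). -/
noncomputable def CRT.reroot (A : CRT) (v : A.V) : CRT :=
  ⟨A.V, A.G, A.isTree, v, A.Vb, A.terminal_mem⟩

/-- The binomial coefficient binom(k+l-1, l), with the convention binom(l-1,l) = δ_{l,0}. -/
def bq (k l : ℕ) : ℚ := (Nat.choose (k + l - 1) l : ℚ)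

/-- A pair (X, k) is harvestable: (H1) the root is a terminal and lies in V_•;
(H2) white vertices are branched; (H3) black vertices are unbranched; (H4) edges from a
white parent have positive index entry; (H5) edges between adjacent black vertices have
positive index entry. -/
def Harvestable (A : CRT) (k : Sym2 A.V → ℕ) : Prop :=
  (A.G.neighborSet A.rt).ncard = 1 ∧ A.rt ∈ A.Vb ∧
  (∀ v : A.V, v ∉ A.Vb → 3 ≤ (A.G.neighborSet v).ncard) ∧
  (∀ v : A.V, v ∈ A.Vb → (A.G.neighborSet v).ncard ≤ 2) ∧
  (∀ v u : A.V, v ∉ A.Vb → A.G.Adj v u → s(v, u) ∈ A.pEdges A.rt u → 0 < k s(v, u)) ∧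
  (∀ u v : A.V, u ∈ A.Vb → v ∈ A.Vb → A.G.Adj u v → 0 < k s(u, v))

/-- ζ_M(X, u; k) ∈ ℚ[[t]]: the sum over (m_v) ∈ I_M(V_•, u) of
∏_{e ∈ E} (∑_{v ∈ V_• : e ∈ P(rt,v)} (m_v + δ_{u,v} t))^{-k_e}, each factor expanded as
a formal power series in t. -/
noncomputable def zetaU (A : CRT) (k : Sym2 A.V → ℕ) (M : ℕ) (u : {x // x ∈ A.Vb}) :
    PowerSeries ℚ :=
  ∑ m ∈ (A.Vb.pi fun _ => Finset.Icc (-(M : ℤ)) (M : ℤ)).filter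
      (fun m => (∀ v, ∀ hv : v ∈ A.Vb, v ≠ u.1 → 0 < m v hv) ∧
        (-(M : ℤ) < m u.1 u.2 ∧ m u.1 u.2 < 0) ∧ (∑ v ∈ A.Vb.attach, m v.1 v.2) = 0),
    (∏ e ∈ Finset.univ.filter (fun e : Sym2 A.V => e ∈ A.G.edgeSet),
        (PowerSeries.C (R := ℚ) (∑ v ∈ A.Vb.attach.filter (fun v => e ∈ A.pEdges A.rt v.1),
            (m v.1 v.2 : ℚ))
          + if e ∈ A.pEdges A.rt u.1 then PowerSeries.X else 0) ^ k e)⁻¹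

/-- ζ^ш_{Ŝ,M}(X; k) = ∑_{u ∈ V_•} ζ_M(X, u; k). -/
noncomputable def zetaShat (A : CRT) (k : Sym2 A.V → ℕ) (M : ℕ) : PowerSeries ℚ :=
  ∑ u ∈ A.Vb.attach, zetaU A k M u

open SimpleGraph

section TreePath
variable {V : Type} (G : SimpleGraph V) (hT : G.IsTree)

lemma tpath_isPath (a b : V) : (tpath G hT a b).IsPath :=
  (((SimpleGraph.isTree_iff_existsUnique_path).mp hT).2 a b).exists.choose_spec

lemma tpath_unique {a b : V} (p : G.Walk a b) (hp : p.IsPath) : p = tpath G hT a b := by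
  have h := ((SimpleGraph.isTree_iff_existsUnique_path).mp hT).2 a b
  exact h.unique hp (tpath_isPath G hT a b)

lemma reachable_delete_iff (e : Sym2 V) (a b : V) :
    (G.deleteEdges {e}).Reachable a b ↔ ∃ p : G.Walk a b, e ∉ p.edges := by
  constructor
  · rintro ⟨p⟩
    refine ⟨p.map (SimpleGraph.Hom.ofLE (by exact deleteEdges_le _)), ?_⟩
    simp_rw [SimpleGraph.Walk.edges_map, List.mem_map, Hom.ofLE_apply,
      Sym2.map_id', id]
    rintro ⟨f, h, rfl⟩
    have hmem := p.edges_subset_edgeSet h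
    rw [edgeSet_deleteEdges] at hmem
    exact hmem.2 rfl
  · rintro ⟨p, h⟩
    refine ⟨p.transfer _ fun f hf => ?_⟩
    rw [edgeSet_deleteEdges]
    exact ⟨p.edges_subset_edgeSet hf, by rintro rfl; exact h hf⟩

end TreePath
section TreePath2
open SimpleGraph
variable {V : Type} {G : SimpleGraph V}

lemma mem_tpath_iff (hT : G.IsTree) (e : Sym2 V) (a b : V) :
    e ∈ (tpath G hT a b).edges ↔ ¬ (G.deleteEdges {e}).Reachable a b := by
  constructor
  · intro hmem hr
    rw [reachable_delete_iff] at hr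
    obtain ⟨p, hp⟩ := hr
    have hbp := tpath_unique G hT p.bypass p.bypass_isPath
    rw [← hbp] at hmem
    exact hp (p.edges_bypass_subset hmem)
  · intro hr
    by_contra hmem
    exact hr ((reachable_delete_iff G e a b).mpr ⟨tpath G hT a b, hmem⟩)

private lemma walk_side {e : Sym2 V} {x y : V} (he : e = s(x, y)) {w z : V} (p : G.Walk w z) :
    (G.deleteEdges {e}).Reachable w z ∨ (G.deleteEdges {e}).Reachable w x
      ∨ (G.deleteEdges {e}).Reachable w y := by
  induction p with
  | nil => exact Or.inl (Reachable.refl _)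
  | @cons w w' z h p ih =>
    by_cases hc : s(w, w') = e
    · rw [he, Sym2.eq_iff] at hc
      rcases hc with ⟨rfl, rfl⟩ | ⟨rfl, rfl⟩
      · exact Or.inr (Or.inl (Reachable.refl _))
      · exact Or.inr (Or.inr (Reachable.refl _))
    · have hadj : (G.deleteEdges {e}).Adj w w' := by
        rw [deleteEdges_adj]
        exact ⟨h, by simpa using hc⟩
      rcases ih with h1 | h1 | h1
      · exact Or.inl (hadj.reachable.trans h1)
      · exact Or.inr (Or.inl (hadj.reachable.trans h1))
      · exact Or.inr (Or.inr (hadj.reachable.trans h1))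

lemma tree_two_class (hT : G.IsTree) {e : Sym2 V} (he : e ∈ G.edgeSet) {p q r : V}
    (h1 : ¬ (G.deleteEdges {e}).Reachable p q) (h2 : ¬ (G.deleteEdges {e}).Reachable q r) :
    (G.deleteEdges {e}).Reachable p r := by
  induction e with
  | _ x y =>
    rw [mem_edgeSet] at he
    have hb : ¬ (G.deleteEdges {s(x,y)}).Reachable x y := by
      have := (isAcyclic_iff_forall_adj_isBridge.mp hT.IsAcyclic) he
      rw [isBridge_iff] at this
      exact this
    have tot : ∀ w : V, (G.deleteEdges {s(x,y)}).Reachable w x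
        ∨ (G.deleteEdges {s(x,y)}).Reachable w y := by
      intro w
      obtain ⟨pw⟩ := hT.isConnected.preconnected w x
      rcases walk_side rfl pw with h | h | h
      · exact Or.inl h
      · exact Or.inl h
      · exact Or.inr h
    have mixed : ∀ {a c : V}, (G.deleteEdges {s(x,y)}).Reachable a x →
        (G.deleteEdges {s(x,y)}).Reachable c y →
        ¬ (G.deleteEdges {s(x,y)}).Reachable a c := fun ha hc hac =>
      hb (ha.symm.trans (hac.trans hc))
    rcases tot p with hp | hp <;> rcases tot r with hr | hr
    · exact hp.trans hr.symm
    · rcases tot q with hq | hq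
      · exact absurd (hp.trans hq.symm) h1
      · exact absurd (hq.trans hr.symm) h2
    · rcases tot q with hq | hq
      · exact absurd (hq.trans hr.symm) h2
      · exact absurd (hp.trans hq.symm) h1
    · exact hp.trans hr.symm
end TreePath2
section PEdgesLemmas
open SimpleGraph
variable (A : CRT)

lemma CRT.mem_pEdges_iff {e : Sym2 A.V} {a b : A.V} :
    e ∈ A.pEdges a b ↔ ¬ (A.G.deleteEdges {e}).Reachable a b :=
  mem_tpath_iff A.isTree e a b

lemma CRT.pEdges_subset {e : Sym2 A.V} {a b : A.V} (h : e ∈ A.pEdges a b) :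
    e ∈ A.G.edgeSet :=
  SimpleGraph.Walk.edges_subset_edgeSet _ h

lemma CRT.pEdges_nodup (a b : A.V) : (A.pEdges a b).Nodup :=
  (tpath_isPath A.G A.isTree a b).edges_nodup

lemma CRT.pEdges_nil (a : A.V) : A.pEdges a a = [] := by
  have h := tpath_unique A.G A.isTree (SimpleGraph.Walk.nil : A.G.Walk a a)
    SimpleGraph.Walk.IsPath.nil
  unfold CRT.pEdges
  rw [← h]
  rfl

lemma CRT.pEdges_flip {e : Sym2 A.V} {a u : A.V} (h : e ∈ A.pEdges a u) (v : A.V) :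
    (e ∈ A.pEdges a v ↔ e ∉ A.pEdges u v) := by
  have he : e ∈ A.G.edgeSet := A.pEdges_subset h
  rw [CRT.mem_pEdges_iff] at h ⊢
  rw [CRT.mem_pEdges_iff]
  constructor
  · intro hav huv
    exact huv (tree_two_class A.isTree he (fun hr => h hr.symm) hav)
  · intro huv hav
    exact h (hav.trans ((not_not.mp huv).symm))

lemma CRT.pEdges_same {e : Sym2 A.V} {a u : A.V} (h : e ∉ A.pEdges a u) (v : A.V) :
    (e ∈ A.pEdges a v ↔ e ∈ A.pEdges u v) := by
  rw [CRT.mem_pEdges_iff] at h ⊢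
  rw [CRT.mem_pEdges_iff]
  have hau := not_not.mp h
  exact not_congr ⟨fun hav => hau.symm.trans hav, fun huv => hau.trans huv⟩

lemma CRT.kP_eq_sum (k : Sym2 A.V → ℕ) (a b : A.V) :
    A.kP k a b = ∑ e ∈ (A.pEdges a b).toFinset, k e := by
  rw [CRT.kP, List.sum_toFinset _ (A.pEdges_nodup a b)]

end PEdgesLemmas
section PSLemmas
open PowerSeries Finset

lemma bq_succ_sum (k n : ℕ) : ∑ j ∈ range (n + 1), bq k j = bq (k + 1) n := by
  have hnat : ∀ n : ℕ, ∑ j ∈ range (n + 1), (k + j - 1).choose j = (k + n).choose n := by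
    intro n
    induction n with
    | zero => simp
    | succ n ih =>
      rw [Finset.sum_range_succ, ih]
      have h1 : k + (n + 1) - 1 = k + n := by omega
      rw [h1]
      rw [show k + (n + 1) = (k + n) + 1 by ring, Nat.choose_succ_succ]
  unfold bq
  rw [← Nat.cast_sum]
  rw [hnat n]
  norm_num

lemma bq_zero_of_pos (n : ℕ) (hn : 0 < n) : bq 0 n = 0 := by
  unfold bq
  rw [Nat.choose_eq_zero_of_lt (by omega)]
  simp

lemma ps_C_inv (a : ℚ) : (PowerSeries.C (R := ℚ) a)⁻¹ = PowerSeries.C (R := ℚ) a⁻¹ := by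
  by_cases ha : a = 0
  · subst ha
    simp only [inv_zero, map_zero]
    exact PowerSeries.inv_eq_zero.mpr (by simp)
  · rw [PowerSeries.inv_eq_iff_mul_eq_one (by simpa using ha)]
    rw [← map_mul, inv_mul_cancel₀ ha, map_one]

lemma ps_C_pow_inv (a : ℚ) (k : ℕ) : ((PowerSeries.C (R := ℚ) a) ^ k)⁻¹ = PowerSeries.C (R := ℚ) ((a⁻¹) ^ k) := by
  rw [← map_pow, ps_C_inv, inv_pow]

lemma ps_geom_inv (a : ℚ) :
    (PowerSeries.C (R := ℚ) a + PowerSeries.X)⁻¹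
      = PowerSeries.mk fun n => (-1 : ℚ) ^ n * (a⁻¹) ^ (n + 1) := by
  by_cases ha : a = 0
  · subst ha
    rw [map_zero, zero_add]
    rw [PowerSeries.inv_eq_zero.mpr (by simp)]
    ext n
    simp [zero_pow (Nat.succ_ne_zero n)]
  · rw [PowerSeries.inv_eq_iff_mul_eq_one (by simpa using ha)]
    ext n
    rw [mul_add, map_add]
    cases n with
    | zero =>
      rw [PowerSeries.coeff_zero_mul_X, PowerSeries.coeff_mul_C]
      simp [inv_mul_cancel₀ ha]
    | succ n =>
      rw [PowerSeries.coeff_succ_mul_X, PowerSeries.coeff_mul_C, PowerSeries.coeff_mk,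
        PowerSeries.coeff_mk, PowerSeries.coeff_one]
      have : (a⁻¹) ^ (n + 1 + 1) * a = (a⁻¹) ^ (n + 1) := by
        rw [pow_succ, mul_assoc, inv_mul_cancel₀ ha, mul_one]
      rw [mul_assoc, this, pow_succ]
      ring_nf
      simp

lemma ps_pow_inv (a : ℚ) (k : ℕ) :
    ((PowerSeries.C (R := ℚ) a + PowerSeries.X) ^ k)⁻¹
      = PowerSeries.mk fun n => (-1 : ℚ) ^ n * bq k n * (a⁻¹) ^ (k + n) := by
  induction k with
  | zero =>
    rw [pow_zero, inv_one]
    ext n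
    rw [PowerSeries.coeff_mk, PowerSeries.coeff_one]
    cases n with
    | zero => simp [bq]
    | succ n => simp [bq_zero_of_pos (n+1) (Nat.succ_pos n)]
  | succ k ih =>
    rw [pow_succ, PowerSeries.mul_inv_rev, ih, ps_geom_inv]
    ext n
    rw [PowerSeries.coeff_mul, PowerSeries.coeff_mk]
    rw [Finset.Nat.sum_antidiagonal_eq_sum_range_succ_mk]
    simp only [PowerSeries.coeff_mk]
    have heach : ∀ j ∈ range (n+1),
        ((-1:ℚ)^j * a⁻¹ ^ (j+1)) * ((-1:ℚ)^(n-j) * bq k (n-j) * a⁻¹ ^ (k+(n-j)))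
          = ((-1:ℚ)^n * a⁻¹ ^ (k+1+n)) * bq k (n-j) := by
      intro j hj
      rw [Finset.mem_range] at hj
      have h1 : (-1:ℚ)^j * (-1:ℚ)^(n-j) = (-1:ℚ)^n := by
        rw [← pow_add]
        congr 1
        omega
      have h2 : (a⁻¹:ℚ) ^ (j+1) * a⁻¹ ^ (k+(n-j)) = a⁻¹ ^ (k+1+n) := by
        rw [← pow_add]
        congr 1
        omega
      calc ((-1:ℚ)^j * a⁻¹ ^ (j+1)) * ((-1:ℚ)^(n-j) * bq k (n-j) * a⁻¹ ^ (k+(n-j)))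
          = ((-1:ℚ)^j * (-1:ℚ)^(n-j)) * ((a⁻¹:ℚ) ^ (j+1) * a⁻¹ ^ (k+(n-j))) * bq k (n-j) := by
            ring
        _ = ((-1:ℚ)^n * a⁻¹ ^ (k+1+n)) * bq k (n-j) := by rw [h1, h2]
    rw [Finset.sum_congr rfl heach, ← Finset.mul_sum]
    have hrefl : ∑ j ∈ range (n+1), bq k (n - j) = ∑ j ∈ range (n+1), bq k j := by
      have := Finset.sum_range_reflect (bq k) (n+1)
      simpa using this
    rw [hrefl, bq_succ_sum]
    ring

end PSLemmas
section SumLemmas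
open Finset

lemma ps_prod_inv {ι : Type} (s : Finset ι) (f : ι → PowerSeries ℚ) :
    (∏ i ∈ s, f i)⁻¹ = ∏ i ∈ s, (f i)⁻¹ := by
  classical
  induction s using Finset.induction_on with
  | empty => simp
  | @insert a s h ih =>
    rw [Finset.prod_insert h, Finset.prod_insert h, PowerSeries.mul_inv_rev, ih, mul_comm]

lemma sum_finsuppAntidiag_eq_pi {ι : Type} [DecidableEq ι] (s : Finset ι) (N : ℕ)
    (F : (∀ a : ι, a ∈ s → ℕ) → ℚ) :
    ∑ l ∈ Finset.finsuppAntidiag s N, F (fun a _ => l a)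
      = ∑ g ∈ (s.pi fun _ => Finset.range (N+1)).filter
          (fun g => (∑ a ∈ s.attach, g a.1 a.2) = N), F g := by
  refine Finset.sum_bij' (fun l _ => (fun a _ => l a)) (fun g _ => Finsupp.indicator s g)
    ?hi ?hj ?li ?ri ?h
  case hi =>
    intro l hl
    rw [Finset.mem_finsuppAntidiag] at hl
    rw [Finset.mem_filter]
    constructor
    · rw [Finset.mem_pi]
      intro a ha
      rw [Finset.mem_range, Nat.lt_succ_iff]
      show l a ≤ N
      rw [← hl.1]
      exact Finset.single_le_sum (fun _ _ => Nat.zero_le _) ha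
    · show (∑ a ∈ s.attach, l a.1) = N
      rw [Finset.sum_attach s (fun a => l a)]
      exact hl.1
  case hj =>
    intro g hg
    rw [Finset.mem_filter] at hg
    rw [Finset.mem_finsuppAntidiag]
    constructor
    · rw [← Finset.sum_attach s (fun a => (Finsupp.indicator s g) a)]
      rw [Finset.sum_congr rfl (fun a _ => Finsupp.indicator_of_mem a.2 g)]
      exact hg.2
    · exact fun a ha => Finsupp.support_indicator_subset _ _ ha
  case li =>
    intro l hl
    rw [Finset.mem_finsuppAntidiag] at hl
    ext a
    by_cases ha : a ∈ s
    · rw [Finsupp.indicator_of_mem ha]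
    · rw [Finsupp.indicator_of_notMem ha]
      by_contra hne
      exact ha (hl.2 (Finsupp.mem_support_iff.mpr (fun h => hne h.symm)))
  case ri =>
    intro g hg
    funext a ha
    exact Finsupp.indicator_of_mem ha g
  case h =>
    intro l hl
    rfl

end SumLemmas
section VbLemma
open SimpleGraph Finset

lemma ncard_neighborSet_eq_degree (A : CRT) (v : A.V) :
    (A.G.neighborSet v).ncard = A.G.degree v := by
  rw [SimpleGraph.degree, SimpleGraph.neighborFinset_def, ← Set.ncard_eq_toFinset_card']

lemma harvestable_exists_ne (A : CRT) (k : Sym2 A.V → ℕ) (hH : Harvestable A k)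
    (u : A.V) (hu : u ∈ A.Vb) : ∃ v ∈ A.Vb, v ≠ u := by
  by_cases hru : A.rt = u
  · subst hru
    by_contra hcon
    push_neg at hcon
    -- every vertex other than rt is white hence degree ≥ 3
    have hdeg_rt : A.G.degree A.rt = 1 := by
      rw [← ncard_neighborSet_eq_degree]; exact hH.1
    have hwhite : ∀ v : A.V, v ≠ A.rt → 3 ≤ A.G.degree v := by
      intro v hv
      rw [← ncard_neighborSet_eq_degree]
      exact hH.2.2.1 v (fun hmem => hv (hcon v hmem))
    have hn2 : 2 ≤ Fintype.card A.V := by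
      have hpos : 0 < A.G.degree A.rt := by omega
      obtain ⟨w, hw⟩ := (SimpleGraph.degree_pos_iff_exists_adj _ _).mp hpos
      exact Fintype.one_lt_card_iff.mpr ⟨w, A.rt, hw.ne'⟩
    have hsum := SimpleGraph.sum_degrees_eq_twice_card_edges A.G
    have hcardE : A.G.edgeFinset.card + 1 = Fintype.card A.V := A.isTree.card_edgeFinset
    have hsplit : ∑ v ∈ Finset.univ.erase A.rt, A.G.degree v + A.G.degree A.rt
        = ∑ v : A.V, A.G.degree v :=
      Finset.sum_erase_add Finset.univ _ (Finset.mem_univ A.rt)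
    have hlow := Finset.card_nsmul_le_sum (Finset.univ.erase A.rt)
      (fun v => A.G.degree v) 3 (fun v hv => hwhite v (Finset.ne_of_mem_erase hv))
    simp only [smul_eq_mul] at hlow
    have hce : (Finset.univ.erase A.rt).card = Fintype.card A.V - 1 := by
      rw [Finset.card_erase_of_mem (Finset.mem_univ _), Finset.card_univ]
    omega
  · exact ⟨A.rt, hH.2.1, hru⟩

end VbLemma
section Bij
open Finset

/-- Forward map: negate-and-shift the distinguished coordinate. -/
noncomputable def fwdm (A : CRT) (M : ℕ) (u : {x // x ∈ A.Vb}) (m : ∀ a ∈ A.Vb, ℤ) :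
    ∀ a ∈ A.Vb, ℕ :=
  fun v hv => if v = u.1 then ((M : ℤ) + m u.1 u.2).toNat else (m v hv).toNat

noncomputable def bwdm (A : CRT) (M : ℕ) (u : {x // x ∈ A.Vb}) (m : ∀ a ∈ A.Vb, ℕ) :
    ∀ a ∈ A.Vb, ℤ :=
  fun v hv => if v = u.1 then (m u.1 u.2 : ℤ) - M else (m v hv : ℤ)

lemma bij_sum (A : CRT) (M : ℕ) (u : {x // x ∈ A.Vb}) {w : A.V} (hw : w ∈ A.Vb)
    (hwu : w ≠ u.1) (Φ : (∀ a ∈ A.Vb, ℕ) → ℚ) :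
    ∑ m ∈ (A.Vb.pi fun _ => Finset.Icc (-(M : ℤ)) (M : ℤ)).filter
      (fun m => (∀ v, ∀ hv : v ∈ A.Vb, v ≠ u.1 → 0 < m v hv) ∧
        (-(M : ℤ) < m u.1 u.2 ∧ m u.1 u.2 < 0) ∧ (∑ v ∈ A.Vb.attach, m v.1 v.2) = 0),
      Φ (fwdm A M u m)
    = ∑ m ∈ (A.Vb.pi fun _ => Finset.Icc 1 M).filter
        (fun m => (∑ v ∈ A.Vb.attach, m v.1 v.2) = M), Φ m := by
  refine Finset.sum_bij' (fun m _ => fwdm A M u m) (fun m' _ => bwdm A M u m')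
    ?hi ?hj ?li ?ri ?h
  case hi =>
    intro m hm
    beta_reduce
    rw [Finset.mem_filter, Finset.mem_pi] at hm
    obtain ⟨hpi, hpos, hneg, hsum⟩ := hm
    simp only [Finset.mem_Icc] at hpi
    rw [Finset.mem_filter, Finset.mem_pi]
    constructor
    · intro a ha
      rw [Finset.mem_Icc]
      unfold fwdm
      by_cases hau : a = u.1
      · rw [if_pos hau]
        omega
      · rw [if_neg hau]
        have h1 := hpos a ha hau
        have h2 := (hpi a ha).2
        omega
    · have hval : ∀ v : {x // x ∈ A.Vb},
          ((fwdm A M u m) v.1 v.2 : ℤ) = m v.1 v.2 + (if v = u then (M : ℤ) else 0) := by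
        intro v
        unfold fwdm
        by_cases hv : v.1 = u.1
        · have hvu : v = u := Subtype.ext hv
          subst hvu
          rw [if_pos rfl, if_pos rfl]
          omega
        · rw [if_neg hv, if_neg (fun h => hv (congrArg Subtype.val h))]
          have := hpos v.1 v.2 hv
          omega
      have : ((∑ v ∈ A.Vb.attach, (fwdm A M u m) v.1 v.2 : ℕ) : ℤ) = (M : ℤ) := by
        push_cast
        rw [Finset.sum_congr rfl (fun v _ => hval v), Finset.sum_add_distrib, hsum,
          Finset.sum_ite_eq' A.Vb.attach u (fun _ => (M : ℤ)), if_pos (Finset.mem_attach _ u)]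
        ring
      exact_mod_cast this
  case hj =>
    intro m' hm'
    beta_reduce
    rw [Finset.mem_filter, Finset.mem_pi] at hm'
    obtain ⟨hpi, hsum⟩ := hm'
    simp only [Finset.mem_Icc] at hpi
    -- m' u ≤ M - 1 because of the other coordinate w
    have hsplit : ∑ v ∈ A.Vb.attach.erase u, m' v.1 v.2 + m' u.1 u.2
        = ∑ v ∈ A.Vb.attach, m' v.1 v.2 :=
      Finset.sum_erase_add _ _ (Finset.mem_attach _ u)
    have hwmem : (⟨w, hw⟩ : {x // x ∈ A.Vb}) ∈ A.Vb.attach.erase u :=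
      Finset.mem_erase.mpr ⟨fun h => hwu (congrArg Subtype.val h), Finset.mem_attach _ _⟩
    have hwle : m' w hw ≤ ∑ v ∈ A.Vb.attach.erase u, m' v.1 v.2 :=
      Finset.single_le_sum (f := fun v : {x // x ∈ A.Vb} => m' v.1 v.2)
        (fun _ _ => Nat.zero_le _) hwmem
    have hw1 : 1 ≤ m' w hw := (hpi w hw).1
    have huM : m' u.1 u.2 + 1 ≤ M := by omega
    rw [Finset.mem_filter, Finset.mem_pi]
    refine ⟨?_, ?_, ?_, ?_⟩
    · intro a ha
      rw [Finset.mem_Icc]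
      unfold bwdm
      by_cases hau : a = u.1
      · rw [if_pos hau]
        have h1 : 1 ≤ m' u.1 u.2 := (hpi u.1 u.2).1
        omega
      · rw [if_neg hau]
        have := (hpi a ha).1
        have := (hpi a ha).2
        omega
    · intro v hv hvu
      unfold bwdm
      rw [if_neg hvu]
      have := (hpi v hv).1
      omega
    · unfold bwdm
      rw [if_pos rfl]
      have h1 : 1 ≤ m' u.1 u.2 := (hpi u.1 u.2).1
      constructor <;> omega
    · have hval : ∀ v : {x // x ∈ A.Vb},
          (bwdm A M u m') v.1 v.2 = (m' v.1 v.2 : ℤ) + (if v = u then -(M : ℤ) else 0) := by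
        intro v
        unfold bwdm
        by_cases hv : v.1 = u.1
        · have hvu : v = u := Subtype.ext hv
          subst hvu
          rw [if_pos rfl, if_pos rfl]
          ring
        · rw [if_neg hv, if_neg (fun h => hv (congrArg Subtype.val h))]
          ring
      rw [Finset.sum_congr rfl (fun v _ => hval v), Finset.sum_add_distrib,
        Finset.sum_ite_eq' A.Vb.attach u (fun _ => -(M : ℤ)), if_pos (Finset.mem_attach _ u)]
      rw [← Nat.cast_sum, hsum]
      ring
  case li =>
    intro m hm
    beta_reduce
    rw [Finset.mem_filter, Finset.mem_pi] at hm
    obtain ⟨hpi, hpos, hneg, hsum⟩ := hm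
    funext v hv
    unfold bwdm fwdm
    by_cases hvu : v = u.1
    · subst hvu
      rw [if_pos rfl, if_pos rfl]
      omega
    · rw [if_neg hvu, if_neg hvu]
      have := hpos v hv hvu
      omega
  case ri =>
    intro m' hm'
    beta_reduce
    rw [Finset.mem_filter, Finset.mem_pi] at hm'
    obtain ⟨hpi, hsum⟩ := hm'
    simp only [Finset.mem_Icc] at hpi
    funext v hv
    unfold fwdm bwdm
    by_cases hvu : v = u.1
    · subst hvu
      rw [if_pos rfl, if_pos rfl]
      omega
    · rw [if_neg hvu, if_neg hvu]
      omega
  case h =>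
    intro m hm
    beta_reduce
    rfl

end Bij
section Key
open Finset

lemma not_mem_pEdges_self (A : CRT) (u v : A.V) (e : Sym2 A.V)
    (he : e ∈ A.pEdges u v) (hv : v = u) : False := by
  subst hv
  rw [A.pEdges_nil] at he
  exact List.not_mem_nil he

lemma SRe_cast (A : CRT) (M : ℕ) (u : {x // x ∈ A.Vb}) (m : ∀ a ∈ A.Vb, ℤ)
    (hpos : ∀ v (hv : v ∈ A.Vb), v ≠ u.1 → 0 < m v hv) (e : Sym2 A.V) :
    ∑ v ∈ A.Vb.attach.filter (fun v => e ∈ A.pEdges u.1 v.1),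
        ((fwdm A M u m) v.1 v.2 : ℚ)
      = ∑ v ∈ A.Vb.attach.filter (fun v => e ∈ A.pEdges u.1 v.1),
          ((m v.1 v.2 : ℤ) : ℚ) := by
  apply Finset.sum_congr rfl
  intro v hv
  rw [Finset.mem_filter] at hv
  have hvu : v.1 ≠ u.1 := by
    intro h
    exact not_mem_pEdges_self A u.1 v.1 e hv.2 h
  have h0 : (0 : ℤ) ≤ m v.1 v.2 := le_of_lt (hpos v.1 v.2 hvu)
  unfold fwdm
  rw [if_neg hvu]
  rw [show (((m v.1 v.2).toNat : ℕ) : ℚ) = (((m v.1 v.2).toNat : ℤ) : ℚ) by push_cast; ring]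
  rw [Int.toNat_of_nonneg h0]

lemma a_eq_neg (A : CRT) (M : ℕ) (u : {x // x ∈ A.Vb}) (m : ∀ a ∈ A.Vb, ℤ)
    (hpos : ∀ v (hv : v ∈ A.Vb), v ≠ u.1 → 0 < m v hv)
    (hsum : (∑ v ∈ A.Vb.attach, m v.1 v.2) = 0) {e : Sym2 A.V}
    (he : e ∈ A.pEdges A.rt u.1) :
    ∑ v ∈ A.Vb.attach.filter (fun v => e ∈ A.pEdges A.rt v.1), ((m v.1 v.2 : ℤ) : ℚ)
      = - ∑ v ∈ A.Vb.attach.filter (fun v => e ∈ A.pEdges u.1 v.1),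
          ((fwdm A M u m) v.1 v.2 : ℚ) := by
  rw [SRe_cast A M u m hpos e]
  have hfc : A.Vb.attach.filter (fun v => e ∈ A.pEdges A.rt v.1)
      = A.Vb.attach.filter (fun v => ¬ (e ∈ A.pEdges u.1 v.1)) :=
    Finset.filter_congr (fun v _ => by
      rw [A.pEdges_flip he v.1])
  rw [hfc]
  have hadd := Finset.sum_filter_add_sum_filter_not A.Vb.attach
    (fun v : {x // x ∈ A.Vb} => e ∈ A.pEdges u.1 v.1)
    (fun v => ((m v.1 v.2 : ℤ) : ℚ))
  have htot : (∑ v ∈ A.Vb.attach, ((m v.1 v.2 : ℤ) : ℚ)) = 0 := by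
    rw [← Int.cast_sum, hsum, Int.cast_zero]
  linarith [hadd, htot]

lemma a_eq_pos (A : CRT) (M : ℕ) (u : {x // x ∈ A.Vb}) (m : ∀ a ∈ A.Vb, ℤ)
    (hpos : ∀ v (hv : v ∈ A.Vb), v ≠ u.1 → 0 < m v hv) {e : Sym2 A.V}
    (he : e ∉ A.pEdges A.rt u.1) :
    ∑ v ∈ A.Vb.attach.filter (fun v => e ∈ A.pEdges A.rt v.1), ((m v.1 v.2 : ℤ) : ℚ)
      = ∑ v ∈ A.Vb.attach.filter (fun v => e ∈ A.pEdges u.1 v.1),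
          ((fwdm A M u m) v.1 v.2 : ℚ) := by
  rw [SRe_cast A M u m hpos e]
  have hfc : A.Vb.attach.filter (fun v => e ∈ A.pEdges A.rt v.1)
      = A.Vb.attach.filter (fun v => e ∈ A.pEdges u.1 v.1) :=
    Finset.filter_congr (fun v _ => by
      rw [A.pEdges_same he v.1])
  rw [hfc]

end Key

section Main
open Finset PowerSeries

set_option maxHeartbeats 1000000 in
lemma perU (A : CRT) (k : Sym2 A.V → ℕ) (hH : Harvestable A k) (M : ℕ)
    (u : {x // x ∈ A.Vb}) :
    zetaU A k M u
      = ((-1 : ℚ) ^ A.kP k A.rt u.1) •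
          PowerSeries.mk (fun N =>
            ∑ l ∈ (((A.pEdges A.rt u.1).toFinset).pi fun _ => Finset.range (N + 1)).filter
                (fun l => (∑ e ∈ (A.pEdges A.rt u.1).toFinset.attach, l e.1 e.2) = N),
              (∏ e ∈ (A.pEdges A.rt u.1).toFinset.attach, bq (k e.1) (l e.1 e.2)) *
                CRT.zetaM (A.reroot u.1)
                  (fun e => k e + (if h : e ∈ (A.pEdges A.rt u.1).toFinset then l e h else 0)) M) := by
  obtain ⟨w, hw, hwu⟩ := harvestable_exists_ne A k hH u.1 u.2
  have hEP : (Finset.univ.filter (fun e : Sym2 A.V => e ∈ A.G.edgeSet)).filter (fun e => e ∈ A.pEdges A.rt u.1) = (A.pEdges A.rt u.1).toFinset := by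
    ext e
    simp only [Finset.mem_filter, Finset.mem_univ, true_and, List.mem_toFinset]
    exact ⟨fun h => h.2, fun h => ⟨A.pEdges_subset h, h⟩⟩
  apply PowerSeries.ext
  intro N
  rw [zetaU, map_sum, PowerSeries.coeff_smul, PowerSeries.coeff_mk, smul_eq_mul]
  -- Step 1: coefficient formula for each m
  have hterm : ∀ m ∈ (A.Vb.pi fun _ => Finset.Icc (-(M : ℤ)) (M : ℤ)).filter
      (fun m => (∀ v, ∀ hv : v ∈ A.Vb, v ≠ u.1 → 0 < m v hv) ∧
        (-(M : ℤ) < m u.1 u.2 ∧ m u.1 u.2 < 0) ∧ (∑ v ∈ A.Vb.attach, m v.1 v.2) = 0),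
      (PowerSeries.coeff (R := ℚ) N) ((∏ e ∈ Finset.univ.filter (fun e : Sym2 A.V => e ∈ A.G.edgeSet),
          (PowerSeries.C (R := ℚ) (∑ v ∈ A.Vb.attach.filter (fun v => e ∈ A.pEdges A.rt v.1), (m v.1 v.2 : ℚ))
            + if e ∈ A.pEdges A.rt u.1 then PowerSeries.X else 0) ^ k e)⁻¹)
      = ∑ l ∈ ((A.pEdges A.rt u.1).toFinset.pi fun _ => Finset.range (N + 1)).filter (fun l => (∑ e ∈ (A.pEdges A.rt u.1).toFinset.attach, l e.1 e.2) = N),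
          (∏ e ∈ (Finset.univ.filter (fun e : Sym2 A.V => e ∈ A.G.edgeSet)).filter (fun e => ¬ e ∈ A.pEdges A.rt u.1),
              ((∑ v ∈ A.Vb.attach.filter (fun v => e ∈ A.pEdges A.rt v.1), (m v.1 v.2 : ℚ))⁻¹) ^ k e)
          * ∏ e ∈ (A.pEdges A.rt u.1).toFinset.attach,
              ((-1 : ℚ) ^ (l e.1 e.2) * bq (k e.1) (l e.1 e.2)
                * ((∑ v ∈ A.Vb.attach.filter (fun v => e.1 ∈ A.pEdges A.rt v.1), (m v.1 v.2 : ℚ))⁻¹) ^ (k e.1 + l e.1 e.2)) := by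
    intro m _
    have hsplit : (∏ e ∈ Finset.univ.filter (fun e : Sym2 A.V => e ∈ A.G.edgeSet),
        (PowerSeries.C (R := ℚ) (∑ v ∈ A.Vb.attach.filter (fun v => e ∈ A.pEdges A.rt v.1), (m v.1 v.2 : ℚ))
          + if e ∈ A.pEdges A.rt u.1 then PowerSeries.X else 0) ^ k e)
        = (∏ e ∈ (A.pEdges A.rt u.1).toFinset, (PowerSeries.C (R := ℚ) (∑ v ∈ A.Vb.attach.filter (fun v => e ∈ A.pEdges A.rt v.1), (m v.1 v.2 : ℚ)) + PowerSeries.X) ^ k e)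
          * ∏ e ∈ (Finset.univ.filter (fun e : Sym2 A.V => e ∈ A.G.edgeSet)).filter (fun e => ¬ e ∈ A.pEdges A.rt u.1),
              (PowerSeries.C (R := ℚ) (∑ v ∈ A.Vb.attach.filter (fun v => e ∈ A.pEdges A.rt v.1), (m v.1 v.2 : ℚ))) ^ k e := by
      rw [← Finset.prod_filter_mul_prod_filter_not (Finset.univ.filter (fun e : Sym2 A.V => e ∈ A.G.edgeSet))
        (fun e => e ∈ A.pEdges A.rt u.1)]
      congr 1
      · rw [hEP]
        apply Finset.prod_congr rfl
        intro e he
        rw [if_pos (List.mem_toFinset.mp he)]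
      · apply Finset.prod_congr rfl
        intro e he
        rw [if_neg (Finset.mem_filter.mp he).2, add_zero]
    rw [hsplit, PowerSeries.mul_inv_rev, ps_prod_inv, ps_prod_inv]
    have h3 : (∏ e ∈ (Finset.univ.filter (fun e : Sym2 A.V => e ∈ A.G.edgeSet)).filter (fun e => ¬ e ∈ A.pEdges A.rt u.1),
        ((PowerSeries.C (R := ℚ) (∑ v ∈ A.Vb.attach.filter (fun v => e ∈ A.pEdges A.rt v.1), (m v.1 v.2 : ℚ))) ^ k e)⁻¹)
        = PowerSeries.C (R := ℚ) (∏ e ∈ (Finset.univ.filter (fun e : Sym2 A.V => e ∈ A.G.edgeSet)).filter (fun e => ¬ e ∈ A.pEdges A.rt u.1),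
            ((∑ v ∈ A.Vb.attach.filter (fun v => e ∈ A.pEdges A.rt v.1), (m v.1 v.2 : ℚ))⁻¹) ^ k e) :=
      (Finset.prod_congr rfl (fun e _ => ps_C_pow_inv _ _)).trans
        (map_prod (PowerSeries.C (R := ℚ)) _ _).symm
    have h4 : (∏ e ∈ (A.pEdges A.rt u.1).toFinset, ((PowerSeries.C (R := ℚ) (∑ v ∈ A.Vb.attach.filter (fun v => e ∈ A.pEdges A.rt v.1), (m v.1 v.2 : ℚ)) + PowerSeries.X) ^ k e)⁻¹)
        = ∏ e ∈ (A.pEdges A.rt u.1).toFinset, PowerSeries.mk (fun n =>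
            (-1 : ℚ) ^ n * bq (k e) n * ((∑ v ∈ A.Vb.attach.filter (fun v => e ∈ A.pEdges A.rt v.1), (m v.1 v.2 : ℚ))⁻¹) ^ (k e + n)) :=
      Finset.prod_congr rfl (fun e _ => ps_pow_inv _ _)
    rw [h3, h4, PowerSeries.coeff_C_mul, PowerSeries.coeff_prod]
    simp only [PowerSeries.coeff_mk]
    rw [Finset.sum_congr rfl (fun l _ => (Finset.prod_attach ((A.pEdges A.rt u.1).toFinset)
      (fun e => (-1 : ℚ) ^ (l e) * bq (k e) (l e) * ((∑ v ∈ A.Vb.attach.filter (fun v => e ∈ A.pEdges A.rt v.1), (m v.1 v.2 : ℚ))⁻¹) ^ (k e + l e))).symm)]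
    rw [sum_finsuppAntidiag_eq_pi ((A.pEdges A.rt u.1).toFinset) N
      (fun g => ∏ e ∈ (A.pEdges A.rt u.1).toFinset.attach,
        (-1 : ℚ) ^ (g e.1 e.2) * bq (k e.1) (g e.1 e.2) * ((∑ v ∈ A.Vb.attach.filter (fun v => e.1 ∈ A.pEdges A.rt v.1), (m v.1 v.2 : ℚ))⁻¹) ^ (k e.1 + g e.1 e.2))]
    rw [Finset.mul_sum]
  rw [Finset.sum_congr rfl hterm, Finset.sum_comm, Finset.mul_sum]
  apply Finset.sum_congr rfl
  intro l hl
  -- per-l goal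
  have hzeta : CRT.zetaM (A.reroot u.1) (fun e => k e + (if h : e ∈ (A.pEdges A.rt u.1).toFinset then l e h else 0)) M
      = ∑ m ∈ (A.Vb.pi fun _ => Finset.Icc 1 M).filter (fun m => (∑ v ∈ A.Vb.attach, m v.1 v.2) = M),
          ∏ e ∈ Finset.univ.filter (fun e : Sym2 A.V => e ∈ A.G.edgeSet),
            ((∑ v ∈ A.Vb.attach.filter (fun v => e ∈ A.pEdges u.1 v.1), (m v.1 v.2 : ℚ))⁻¹) ^ (k e + (if h : e ∈ (A.pEdges A.rt u.1).toFinset then l e h else 0)) := by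
    unfold CRT.zetaM CRT.reroot
    apply Finset.sum_congr rfl
    intro m _
    apply Finset.prod_congr rfl
    intro e _
    beta_reduce
    congr 2
    split_ifs <;> rfl
  have halg : ∀ m ∈ (A.Vb.pi fun _ => Finset.Icc (-(M : ℤ)) (M : ℤ)).filter
      (fun m => (∀ v, ∀ hv : v ∈ A.Vb, v ≠ u.1 → 0 < m v hv) ∧
        (-(M : ℤ) < m u.1 u.2 ∧ m u.1 u.2 < 0) ∧ (∑ v ∈ A.Vb.attach, m v.1 v.2) = 0),
      (∏ e ∈ (Finset.univ.filter (fun e : Sym2 A.V => e ∈ A.G.edgeSet)).filter (fun e => ¬ e ∈ A.pEdges A.rt u.1),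
          ((∑ v ∈ A.Vb.attach.filter (fun v => e ∈ A.pEdges A.rt v.1), (m v.1 v.2 : ℚ))⁻¹) ^ k e)
        * ∏ e ∈ (A.pEdges A.rt u.1).toFinset.attach,
            ((-1 : ℚ) ^ (l e.1 e.2) * bq (k e.1) (l e.1 e.2)
              * ((∑ v ∈ A.Vb.attach.filter (fun v => e.1 ∈ A.pEdges A.rt v.1), (m v.1 v.2 : ℚ))⁻¹) ^ (k e.1 + l e.1 e.2))
      = ((-1 : ℚ) ^ A.kP k A.rt u.1) * ((∏ e ∈ (A.pEdges A.rt u.1).toFinset.attach, bq (k e.1) (l e.1 e.2))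
          * ∏ e ∈ Finset.univ.filter (fun e : Sym2 A.V => e ∈ A.G.edgeSet),
              ((∑ v ∈ A.Vb.attach.filter (fun v => e ∈ A.pEdges u.1 v.1), ((fwdm A M u m) v.1 v.2 : ℚ))⁻¹) ^ (k e + (if h : e ∈ (A.pEdges A.rt u.1).toFinset then l e h else 0))) := by
    intro m hm
    rw [Finset.mem_filter, Finset.mem_pi] at hm
    obtain ⟨hpi, hpos, hneg, hsum⟩ := hm
    -- split the full edge product on the RHS
    rw [← Finset.prod_filter_mul_prod_filter_not (Finset.univ.filter (fun e : Sym2 A.V => e ∈ A.G.edgeSet))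
      (fun e => e ∈ A.pEdges A.rt u.1) (fun e =>
        ((∑ v ∈ A.Vb.attach.filter (fun v => e ∈ A.pEdges u.1 v.1), ((fwdm A M u m) v.1 v.2 : ℚ))⁻¹) ^ (k e + (if h : e ∈ (A.pEdges A.rt u.1).toFinset then l e h else 0))), hEP]
    -- the off-path part of the RHS product equals the off-path part of the LHS
    have hoff : (∏ e ∈ (Finset.univ.filter (fun e : Sym2 A.V => e ∈ A.G.edgeSet)).filter (fun e => ¬ e ∈ A.pEdges A.rt u.1),
        ((∑ v ∈ A.Vb.attach.filter (fun v => e ∈ A.pEdges u.1 v.1), ((fwdm A M u m) v.1 v.2 : ℚ))⁻¹) ^ (k e + (if h : e ∈ (A.pEdges A.rt u.1).toFinset then l e h else 0)))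
        = ∏ e ∈ (Finset.univ.filter (fun e : Sym2 A.V => e ∈ A.G.edgeSet)).filter (fun e => ¬ e ∈ A.pEdges A.rt u.1),
            ((∑ v ∈ A.Vb.attach.filter (fun v => e ∈ A.pEdges A.rt v.1), (m v.1 v.2 : ℚ))⁻¹) ^ k e := by
      apply Finset.prod_congr rfl
      intro e he
      have hne : ¬ e ∈ A.pEdges A.rt u.1 := (Finset.mem_filter.mp he).2
      rw [dif_neg (fun hc => hne (List.mem_toFinset.mp hc)), add_zero,
        a_eq_pos A M u m hpos hne]
    have hon : (∏ e ∈ (A.pEdges A.rt u.1).toFinset,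
        ((∑ v ∈ A.Vb.attach.filter (fun v => e ∈ A.pEdges u.1 v.1), ((fwdm A M u m) v.1 v.2 : ℚ))⁻¹) ^ (k e + (if h : e ∈ (A.pEdges A.rt u.1).toFinset then l e h else 0)))
        = ∏ e ∈ (A.pEdges A.rt u.1).toFinset.attach,
            ((∑ v ∈ A.Vb.attach.filter (fun v => e.1 ∈ A.pEdges u.1 v.1), ((fwdm A M u m) v.1 v.2 : ℚ))⁻¹) ^ (k e.1 + l e.1 e.2) := by
      rw [← Finset.prod_attach ((A.pEdges A.rt u.1).toFinset) (fun e =>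
        ((∑ v ∈ A.Vb.attach.filter (fun v => e ∈ A.pEdges u.1 v.1), ((fwdm A M u m) v.1 v.2 : ℚ))⁻¹) ^ (k e + (if h : e ∈ (A.pEdges A.rt u.1).toFinset then l e h else 0)))]
      apply Finset.prod_congr rfl
      intro e _
      rw [dif_pos e.2]
    rw [hoff, hon]
    -- rewrite each on-path factor of the LHS
    have hfac : ∀ e ∈ (A.pEdges A.rt u.1).toFinset.attach,
        (-1 : ℚ) ^ (l e.1 e.2) * bq (k e.1) (l e.1 e.2)
            * ((∑ v ∈ A.Vb.attach.filter (fun v => e.1 ∈ A.pEdges A.rt v.1), (m v.1 v.2 : ℚ))⁻¹) ^ (k e.1 + l e.1 e.2)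
        = ((-1 : ℚ) ^ (k e.1)) * (bq (k e.1) (l e.1 e.2)
            * ((∑ v ∈ A.Vb.attach.filter (fun v => e.1 ∈ A.pEdges u.1 v.1), ((fwdm A M u m) v.1 v.2 : ℚ))⁻¹) ^ (k e.1 + l e.1 e.2)) := by
      intro e _
      rw [a_eq_neg A M u m hpos hsum (List.mem_toFinset.mp e.2), inv_neg,
        neg_pow ((∑ v ∈ A.Vb.attach.filter (fun v => e.1 ∈ A.pEdges u.1 v.1), ((fwdm A M u m) v.1 v.2 : ℚ))⁻¹) (k e.1 + l e.1 e.2)]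
      have hsgn : (-1 : ℚ) ^ (l e.1 e.2) * (-1 : ℚ) ^ (k e.1 + l e.1 e.2) = (-1 : ℚ) ^ (k e.1) := by
        rw [← pow_add, show l e.1 e.2 + (k e.1 + l e.1 e.2) = k e.1 + 2 * l e.1 e.2 by ring,
          pow_add, pow_mul, neg_one_sq, one_pow, mul_one]
      calc (-1 : ℚ) ^ (l e.1 e.2) * bq (k e.1) (l e.1 e.2)
            * ((-1 : ℚ) ^ (k e.1 + l e.1 e.2) * ((∑ v ∈ A.Vb.attach.filter (fun v => e.1 ∈ A.pEdges u.1 v.1), ((fwdm A M u m) v.1 v.2 : ℚ))⁻¹) ^ (k e.1 + l e.1 e.2))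
          = ((-1 : ℚ) ^ (l e.1 e.2) * (-1 : ℚ) ^ (k e.1 + l e.1 e.2)) * (bq (k e.1) (l e.1 e.2)
              * ((∑ v ∈ A.Vb.attach.filter (fun v => e.1 ∈ A.pEdges u.1 v.1), ((fwdm A M u m) v.1 v.2 : ℚ))⁻¹) ^ (k e.1 + l e.1 e.2)) := by ring
        _ = _ := by rw [hsgn]
    rw [Finset.prod_congr rfl hfac, Finset.prod_mul_distrib, Finset.prod_mul_distrib,
      Finset.prod_pow_eq_pow_sum]
    have hkp : ∑ e ∈ (A.pEdges A.rt u.1).toFinset.attach, k e.1 = A.kP k A.rt u.1 := by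
      rw [A.kP_eq_sum k A.rt u.1, Finset.sum_attach ((A.pEdges A.rt u.1).toFinset) (fun e => k e)]
    rw [hkp]
    ring
  rw [Finset.sum_congr rfl halg,
    bij_sum A M u hw hwu (fun m' => ((-1 : ℚ) ^ A.kP k A.rt u.1)
      * ((∏ e ∈ (A.pEdges A.rt u.1).toFinset.attach, bq (k e.1) (l e.1 e.2))
        * ∏ e ∈ Finset.univ.filter (fun e : Sym2 A.V => e ∈ A.G.edgeSet),
            ((∑ v ∈ A.Vb.attach.filter (fun v => e ∈ A.pEdges u.1 v.1), (m' v.1 v.2 : ℚ))⁻¹) ^ (k e + (if h : e ∈ (A.pEdges A.rt u.1).toFinset then l e h else 0)))),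
    hzeta, Finset.mul_sum, Finset.mul_sum]

end Main

/-- for a harvestable pair (X, k) and every M ≥ 0,
ζ^ш_{Ŝ,M}(X; k) = ∑_{v ∈ V_•} (-1)^{k_{P(rt,v)}} ∑_{l ∈ ℤ_{≥0}^{P(rt,v)}}
b_{P(rt,v)}(k,l) ζ_M(X_v; k+l) t^{l_{P(rt,v)}} in ℚ[[t]]. -/
theorem stmt13 (A : CRT) (k : Sym2 A.V → ℕ) (hH : Harvestable A k) (M : ℕ) :
    zetaShat A k M
      = ∑ v ∈ A.Vb.attach, ((-1 : ℚ) ^ A.kP k A.rt v.1) •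
          PowerSeries.mk (fun N =>
            ∑ l ∈ ((A.pEdges A.rt v.1).toFinset.pi fun _ => Finset.range (N + 1)).filter
                (fun l =>
                  (∑ e ∈ (A.pEdges A.rt v.1).toFinset.attach, l e.1 e.2) = N),
              (∏ e ∈ (A.pEdges A.rt v.1).toFinset.attach, bq (k e.1) (l e.1 e.2)) *
                CRT.zetaM (A.reroot v.1)
                  (fun e => k e +
                    (if h : e ∈ (A.pEdges A.rt v.1).toFinset then l e h else 0)) M) := by
  rw [zetaShat]
  exact Finset.sum_congr rfl (fun u _ => perU A k hH M u)
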